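/- Let 0 < μ ≤ L, let f ∈ S¹_{μ,L}(ℝ^d), let g : ℝ^d → ℝ be convex and continuous, set Φ = f + g with unique minimizer x⋆, and let 0 < s < 1/L. Then for every y ∈ ℝ^d, the s-proximal subgradient satisfies ‖G_s(y)‖² ≥ 2μ ( Φ(y − sG_s(y)) − Φ(x⋆) ). -/

import Mathlib

set_option maxHeartbeats 2000000

open scoped RealInnerProductSpace

section Helpers

variable {E : Type*} [NormedAddCommGroup E] [InnerProductSpace ℝ E] [CompleteSpace E]


/-- Gradient inequality for a convex differentiable function. -/
lemma convex_grad_ineq_aux {φ : E → ℝ} {φ' : E → E}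
    (hφ : ConvexOn ℝ Set.univ φ) (hd : ∀ z, HasGradientAt φ (φ' z) z)
    (x y : E) : φ y + ⟪φ' y, x - y⟫ ≤ φ x := by
  rcases eq_or_ne x y with rfl | hxy
  · simp
  set ψ : ℝ → ℝ := fun t => φ ((AffineMap.lineMap y x : ℝ →ᵃ[ℝ] E) t) with hψdef
  have hline : ∀ t : ℝ, (AffineMap.lineMap y x : ℝ →ᵃ[ℝ] E) t = t • (x - y) + y := by
    intro t; simp [AffineMap.lineMap_apply_module]; module
  have hconv : ConvexOn ℝ Set.univ ψ := by
    have h := hφ.comp_affineMap (AffineMap.lineMap y x : ℝ →ᵃ[ℝ] E)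
    rw [Set.preimage_univ] at h; exact h
  have hder : HasDerivAt ψ ⟪φ' y, x - y⟫ 0 := by
    have hl : HasDerivAt (fun t : ℝ => t • (x - y) + y) (x - y) 0 := by
      simpa using ((hasDerivAt_id (0:ℝ)).smul_const (x - y)).add_const y
    have hgrad : HasFDerivAt φ (InnerProductSpace.toDual ℝ E (φ' y)) ((0:ℝ) • (x - y) + y) := by
      simpa using (hd y).hasFDerivAt
    have hcomp := hgrad.comp_hasDerivAt (0:ℝ) hl
    have : HasDerivAt (fun t : ℝ => φ (t • (x - y) + y)) ⟪φ' y, x - y⟫ 0 := by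
      simp only [InnerProductSpace.toDual_apply_apply] at hcomp; exact hcomp
    apply this.congr_of_eventuallyEq
    filter_upwards with t
    rw [hψdef]; simp [hline]
  have hslope := hconv.le_slope_of_hasDerivAt (Set.mem_univ (0:ℝ)) (Set.mem_univ (1:ℝ))
    one_pos hder
  have h0 : ψ 0 = φ y := by simp [hψdef, hline]
  have h1 : ψ 1 = φ x := by simp [hψdef, hline]
  rw [slope_def_field] at hslope
  simp [h0, h1] at hslope
  linarith

/-- Descent-type lemma from Lipschitz gradient (with constant L instead of L/2). -/
lemma descent_aux {f : E → ℝ} {f' : E → E}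
    (hdiff : ∀ z, HasGradientAt f (f' z) z)
    {L : ℝ} (hL : 0 ≤ L) (hlip : ∀ z w, ‖f' z - f' w‖ ≤ L * ‖z - w‖) (x y : E) :
    f x ≤ f y + ⟪f' y, x - y⟫ + L * ‖x - y‖ ^ 2 := by
  set h : E → ℝ := fun z => f z - (InnerProductSpace.toDual ℝ E (f' y)) z with hhdef
  have hmem : ∀ z ∈ segment ℝ y x, ‖z - y‖ ≤ ‖x - y‖ := by
    rintro z ⟨a, b, ha, hb, hab, rfl⟩
    have : a • y + b • x - y = b • (x - y) := by
      have : a = 1 - b := by linarith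
      rw [this]; module
    rw [this, norm_smul]
    simp only [Real.norm_eq_abs, abs_of_nonneg hb]
    have : b ≤ 1 := by linarith
    nlinarith [norm_nonneg (x - y)]
  have hfd : ∀ z ∈ segment ℝ y x, HasFDerivWithinAt h
      (InnerProductSpace.toDual ℝ E (f' z - f' y)) (segment ℝ y x) z := by
    intro z hz
    have h1 : HasFDerivAt h
        (InnerProductSpace.toDual ℝ E (f' z) - InnerProductSpace.toDual ℝ E (f' y)) z :=
      (hdiff z).hasFDerivAt.sub (InnerProductSpace.toDual ℝ E (f' y)).hasFDerivAt
    rw [← map_sub] at h1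
    exact h1.hasFDerivWithinAt
  have hbound : ∀ z ∈ segment ℝ y x,
      ‖InnerProductSpace.toDual ℝ E (f' z - f' y)‖ ≤ L * ‖x - y‖ := by
    intro z hz
    rw [LinearIsometryEquiv.norm_map]
    calc ‖f' z - f' y‖ ≤ L * ‖z - y‖ := hlip z y
    _ ≤ L * ‖x - y‖ := mul_le_mul_of_nonneg_left (hmem z hz) hL
  have hkey := Convex.norm_image_sub_le_of_norm_hasFDerivWithin_le hfd hbound
    (convex_segment y x) (left_mem_segment ℝ y x) (right_mem_segment ℝ y x)
  have hhx : h x - h y = f x - f y - ⟪f' y, x - y⟫ := by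
    simp [hhdef, InnerProductSpace.toDual_apply_apply, inner_sub_right]
    ring
  have habs : h x - h y ≤ L * ‖x - y‖ * ‖x - y‖ := by
    calc h x - h y ≤ ‖h x - h y‖ := le_abs_self _
    _ ≤ L * ‖x - y‖ * ‖x - y‖ := hkey
  rw [hhx] at habs
  nlinarith [habs]


lemma strong_convex_grad_ineq_aux {μ : ℝ} {f : E → ℝ} {f' : E → E}
    (hdiff : ∀ z, HasGradientAt f (f' z) z)
    (hsc : ConvexOn ℝ Set.univ (fun z => f z - μ / 2 * ‖z‖ ^ 2))
    (x y : E) : f y + ⟪f' y, x - y⟫ + μ / 2 * ‖x - y‖ ^ 2 ≤ f x := by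
  have hgrad : ∀ z, HasGradientAt (fun w => f w - μ / 2 * ‖w‖ ^ 2) (f' z - μ • z) z := by
    intro z
    rw [hasGradientAt_iff_hasFDerivAt]
    have h2 : HasFDerivAt (fun w : E => μ / 2 * ‖w‖ ^ 2)
        (InnerProductSpace.toDual ℝ E (μ • z)) z := by
      have hi := (hasFDerivAt_id z).inner ℝ (hasFDerivAt_id z)
      have h3 := hi.const_mul (μ / 2)
      have heq : (fun w : E => μ / 2 * ‖w‖ ^ 2) = fun w : E => μ / 2 * ⟪w, w⟫ := by
        funext w; rw [real_inner_self_eq_norm_sq]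
      rw [heq]
      refine h3.congr_fderiv ?_
      ext w
      simp [InnerProductSpace.toDual_apply_apply, fderivInnerCLM_apply, real_inner_smul_left,
        real_inner_comm]
      ring
    have h4 := (hdiff z).hasFDerivAt.sub h2
    rwa [← map_sub] at h4
  have hkey := convex_grad_ineq_aux hsc hgrad x y
  have hkey' : f y - μ / 2 * ‖y‖ ^ 2 + ⟪f' y - μ • y, x - y⟫ ≤ f x - μ / 2 * ‖x‖ ^ 2 := hkey
  have hexp : ‖x‖ ^ 2 = ‖y‖ ^ 2 + 2 * ⟪y, x - y⟫ + ‖x - y‖ ^ 2 := by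
    have h := norm_add_sq_real y (x - y)
    simpa using h
  have hin : ⟪f' y - μ • y, x - y⟫ = ⟪f' y, x - y⟫ - μ * ⟪y, x - y⟫ := by
    rw [inner_sub_left, real_inner_smul_left]
  rw [hin] at hkey'
  have hexp2 : μ / 2 * ‖x‖ ^ 2 = μ / 2 * ‖y‖ ^ 2 + μ * ⟪y, x - y⟫ + μ / 2 * ‖x - y‖ ^ 2 := by
    rw [hexp]; ring
  linarith [hkey', hexp2]

end Helpers

theorem proximal_subgradient_strongly_convex_inequality {d : ℕ} (μ L s : ℝ)
    (hμ : 0 < μ) (hμL : μ ≤ L) (hs : 0 < s) (hsL : s < 1 / L)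
    (f : EuclideanSpace ℝ (Fin d) → ℝ)
    (f' : EuclideanSpace ℝ (Fin d) → EuclideanSpace ℝ (Fin d))
    (hdiff : ∀ z, HasGradientAt f (f' z) z)
    (hlip : ∀ z w, ‖f' z - f' w‖ ≤ L * ‖z - w‖)
    (hsc : ConvexOn ℝ Set.univ (fun z => f z - μ / 2 * ‖z‖ ^ 2))
    (g : EuclideanSpace ℝ (Fin d) → ℝ)
    (hgconv : ConvexOn ℝ Set.univ g) (hgcont : Continuous g)
    (P G : EuclideanSpace ℝ (Fin d) → EuclideanSpace ℝ (Fin d))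
    (hP : ∀ z, IsMinOn (fun w => 1 / (2 * s) * ‖w - (z - s • f' z)‖ ^ 2 + g w) Set.univ (P z))
    (hG : ∀ z, G z = s⁻¹ • (z - P z))
    (xstar : EuclideanSpace ℝ (Fin d))
    (hmin : ∀ z, f xstar + g xstar ≤ f z + g z)
    (huniq : ∀ z, (∀ w, f z + g z ≤ f w + g w) → z = xstar)
    :
    ∀ y : EuclideanSpace ℝ (Fin d),
      ‖G y‖ ^ 2 ≥ 2 * μ * ((f (y - s • G y) + g (y - s • G y)) - (f xstar + g xstar)) := by
  intro y
  have hL : 0 < L := lt_of_lt_of_le hμ hμL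
  have hLs : L * s < 1 := by
    rw [lt_div_iff₀ hL] at hsL; linarith
  have hsne : s ≠ 0 := ne_of_gt hs
  have hsmul : s • G y = y - P y := by rw [hG y, smul_inv_smul₀ hsne]
  have hpn : y - s • G y = P y := by rw [hsmul, sub_sub_cancel]
  rw [hpn, ge_iff_le]
  set p := P y with hpdef
  set n := G y with hndef
  set v := y - s • f' y with hvdef
  -- key scalar quantities
  set a : ℝ := ⟪f' y, xstar - y⟫ with hadef
  set b : ℝ := ⟪n, xstar - y⟫ with hbdef
  set c : ℝ := ⟪f' y, n⟫ with hcdef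
  -- geometric identities
  have hpn' : p = y - s • n := hpn.symm
  have hxp : xstar - p = (xstar - y) + s • n := by rw [hpn']; module
  have hpy : p - y = -(s • n) := by rw [hpn']; module
  have hpv : p - v = s • (f' y - n) := by rw [hpn', hvdef]; module
  -- strong convexity
  have hA : f y + a + μ / 2 * ‖xstar - y‖ ^ 2 ≤ f xstar :=
    strong_convex_grad_ineq_aux hdiff hsc xstar y
  -- descent lemma
  have hB : f p ≤ f y - s * c + L * (s ^ 2 * ‖n‖ ^ 2) := by
    have h := descent_aux hdiff hL.le hlip p y
    have h1 : ⟪f' y, p - y⟫ = -(s * c) := by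
      rw [hpy, inner_neg_right, real_inner_smul_right, hcdef]
    have h2 : ‖p - y‖ ^ 2 = s ^ 2 * ‖n‖ ^ 2 := by
      rw [hpy, norm_neg, norm_smul, mul_pow, Real.norm_eq_abs, sq_abs]
    rw [h1, h2] at h
    linarith
  -- proximal subgradient inequality for g
  have hC : g p + (b + s * ‖n‖ ^ 2 - a - s * c) ≤ g xstar := by
    have key : ∀ t : ℝ, 0 < t → t ≤ 1 →
        0 ≤ (g xstar - g p + (1 / s) * ⟪p - v, xstar - p⟫)
          + t * (1 / (2 * s) * ‖xstar - p‖ ^ 2) := by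
      intro t ht ht1
      have hmin' := isMinOn_iff.mp (hP y) (p + t • (xstar - p)) (Set.mem_univ _)
      have hgc : g (p + t • (xstar - p)) ≤ (1 - t) * g p + t * g xstar := by
        have h := hgconv.2 (Set.mem_univ p) (Set.mem_univ xstar)
          (by linarith : (0:ℝ) ≤ 1 - t) (le_of_lt ht) (by ring)
        have hpt : (1 - t) • p + t • xstar = p + t • (xstar - p) := by module
        simpa [hpt] using h
      have hq : ‖p + t • (xstar - p) - v‖ ^ 2
          = ‖p - v‖ ^ 2 + 2 * t * ⟪p - v, xstar - p⟫ + t ^ 2 * ‖xstar - p‖ ^ 2 := by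
        have h1 : p + t • (xstar - p) - v = (p - v) + t • (xstar - p) := by module
        rw [h1, norm_add_sq_real, real_inner_smul_right, norm_smul, mul_pow,
          Real.norm_eq_abs, sq_abs]
        ring
      have hmin'' : 1 / (2 * s) * ‖p - v‖ ^ 2 + g p
          ≤ 1 / (2 * s) * (‖p - v‖ ^ 2 + 2 * t * ⟪p - v, xstar - p⟫
              + t ^ 2 * ‖xstar - p‖ ^ 2) + g (p + t • (xstar - p)) := by
        have := hmin'
        rw [← hpdef, ← hvdef] at this
        simpa [hq] using this
      have h0 : 0 ≤ t * ((g xstar - g p + (1 / s) * ⟪p - v, xstar - p⟫)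
          + t * (1 / (2 * s) * ‖xstar - p‖ ^ 2)) := by
        have hexpand : t * ((g xstar - g p + (1 / s) * ⟪p - v, xstar - p⟫)
            + t * (1 / (2 * s) * ‖xstar - p‖ ^ 2))
            = (1 / (2 * s) * (‖p - v‖ ^ 2 + 2 * t * ⟪p - v, xstar - p⟫
              + t ^ 2 * ‖xstar - p‖ ^ 2) + ((1 - t) * g p + t * g xstar))
              - (1 / (2 * s) * ‖p - v‖ ^ 2 + g p) := by
          field_simp
          ring
        rw [hexpand]
        linarith [hmin'', hgc]
      by_contra hneg
      push_neg at hneg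
      have := mul_neg_of_pos_of_neg ht hneg
      linarith
    have hQnn : 0 ≤ 1 / (2 * s) * ‖xstar - p‖ ^ 2 := by positivity
    set X : ℝ := g xstar - g p + (1 / s) * ⟪p - v, xstar - p⟫ with hXdef
    set Y : ℝ := 1 / (2 * s) * ‖xstar - p‖ ^ 2 with hYdef
    have hX : 0 ≤ X := by
      by_contra hXneg
      push_neg at hXneg
      have ht0 : 0 < min 1 ((-X) / (2 * (Y + 1))) :=
        lt_min one_pos (div_pos (by linarith) (by linarith))
      have ht1 : min 1 ((-X) / (2 * (Y + 1))) ≤ 1 := min_le_left _ _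
      have h1 := key _ ht0 ht1
      have h2 : min 1 ((-X) / (2 * (Y + 1))) ≤ (-X) / (2 * (Y + 1)) := min_le_right _ _
      have h3 : min 1 ((-X) / (2 * (Y + 1))) * (2 * (Y + 1)) ≤ -X := by
        rw [← le_div_iff₀ (by linarith : (0:ℝ) < 2 * (Y + 1))]
        exact h2
      have h4 : 0 ≤ min 1 ((-X) / (2 * (Y + 1))) * Y := mul_nonneg ht0.le hQnn
      nlinarith [h1, h3, h4, ht0]
    have hXeq : X = g xstar - g p + (a + s * c - b - s * ‖n‖ ^ 2) := by
      rw [hXdef, hpv, real_inner_smul_left, ← mul_assoc, one_div_mul_cancel hsne, one_mul,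
        hxp, inner_sub_left, inner_add_right, inner_add_right, real_inner_smul_right,
        real_inner_smul_right, real_inner_self_eq_norm_sq, ← hadef, ← hbdef, ← hcdef]
      ring
    rw [hXeq] at hX
    linarith
  -- combine
  have hsum : f p + g p - (f xstar + g xstar)
      ≤ -b - μ / 2 * ‖xstar - y‖ ^ 2 + (L * s ^ 2 - s) * ‖n‖ ^ 2 := by
    linarith
  have hLsN : (L * s ^ 2 - s) * ‖n‖ ^ 2 ≤ 0 := by
    have : L * s ^ 2 - s ≤ 0 := by nlinarith
    exact mul_nonpos_of_nonpos_of_nonneg this (sq_nonneg _)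
  have hbb : -b ≤ ‖n‖ * ‖xstar - y‖ := by
    have h := real_inner_le_norm n (y - xstar)
    have : -b = ⟪n, y - xstar⟫ := by
      rw [hbdef, ← inner_neg_right]; congr 1; abel
    rw [this]
    calc ⟪n, y - xstar⟫ ≤ ‖n‖ * ‖y - xstar‖ := h
    _ = ‖n‖ * ‖xstar - y‖ := by rw [norm_sub_rev]
  have hfinal : f p + g p - (f xstar + g xstar)
      ≤ ‖n‖ * ‖xstar - y‖ - μ / 2 * ‖xstar - y‖ ^ 2 := by linarith
  nlinarith [mul_le_mul_of_nonneg_left hfinal (by linarith : (0:ℝ) ≤ 2 * μ),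
    sq_nonneg (‖n‖ - μ * ‖xstar - y‖)]
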